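/- Consider $n$ users, and for each user $i$ suppose the Cesàro limits $L_i$ (loss-of-load rate), $C_i$ (net contribution) and $\Delta_i$ (drift) exist, with feasibility constraints (if $x_{i,t}>0$ then $0\le a_{i,t}\le x_{i,t}$; if $x_{i,t}\le 0$ then $x_{i,t}\le a_{i,t}\le 0$) and fairness constraints $C_i \ge 0$ for all $i$. Then the total loss-of-load rate satisfies $\sum_{i=1}^n L_i \ge \sum_{i \in \mathscr{D}} (-\Delta_i)$, where $\mathscr{D} = \{i : \Delta_i < 0\}$ is the set of net-demanding users. -/

import Mathlib

open Filter

theorem stmt2 (n : ℕ) (x a : Fin n → ℕ → ℝ) (L C Δ : Fin n → ℝ)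
    (hfeas : ∀ i t, (x i t > 0 → 0 ≤ a i t ∧ a i t ≤ x i t) ∧
      (x i t ≤ 0 → x i t ≤ a i t ∧ a i t ≤ 0))
    (hL : ∀ i, Tendsto
      (fun T : ℕ => (∑ t ∈ Finset.range T, (if x i t < 0 then a i t - x i t else 0)) / T)
      atTop (nhds (L i)))
    (hC : ∀ i, Tendsto (fun T : ℕ => (∑ t ∈ Finset.range T, a i t) / T) atTop (nhds (C i)))
    (hΔ : ∀ i, Tendsto (fun T : ℕ => (∑ t ∈ Finset.range T, x i t) / T) atTop (nhds (Δ i)))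
    (hfair : ∀ i, C i ≥ 0) :
    ∑ i, L i ≥ ∑ i ∈ Finset.univ.filter (fun i => Δ i < 0), (-Δ i) := by
  -- pointwise bounds on the summand
  have hterm_ge : ∀ i t, (if x i t < 0 then a i t - x i t else 0) ≥ a i t - x i t := by
    intro i t
    by_cases h : x i t < 0
    · simp [h]
    · simp only [h, if_false]
      push_neg at h
      rcases lt_or_eq_of_le h with h' | h'
      · have := (hfeas i t).1 h'
        linarith [this.2]
      · have := (hfeas i t).2 (le_of_eq h'.symm)
        linarith [this.1, this.2]
  have hterm_nonneg : ∀ i t, (0:ℝ) ≤ (if x i t < 0 then a i t - x i t else 0) := by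
    intro i t
    by_cases h : x i t < 0
    · have := (hfeas i t).2 h.le
      simp only [h, if_true]; linarith [this.1]
    · simp [h]
  -- L i ≥ C i - Δ i
  have hLCΔ : ∀ i, L i ≥ C i - Δ i := by
    intro i
    have htend : Tendsto (fun T : ℕ => (∑ t ∈ Finset.range T, a i t) / T
        - (∑ t ∈ Finset.range T, x i t) / T) atTop (nhds (C i - Δ i)) :=
      (hC i).sub (hΔ i)
    refine le_of_tendsto_of_tendsto' htend (hL i) ?_
    intro T
    rcases Nat.eq_zero_or_pos T with h | h
    · simp [h]
    · rw [div_sub_div_same]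
      have hT : (0:ℝ) < T := by exact_mod_cast h
      gcongr
      rw [← Finset.sum_sub_distrib]
      exact Finset.sum_le_sum fun t _ => hterm_ge i t
  -- L i ≥ 0
  have hLnn : ∀ i, 0 ≤ L i := by
    intro i
    refine ge_of_tendsto' (hL i) fun T => ?_
    exact div_nonneg (Finset.sum_nonneg fun t _ => hterm_nonneg i t) (Nat.cast_nonneg T)
  calc ∑ i ∈ Finset.univ.filter (fun i => Δ i < 0), (-Δ i)
      ≤ ∑ i ∈ Finset.univ.filter (fun i => Δ i < 0), L i := by
        refine Finset.sum_le_sum fun i _ => ?_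
        have := hfair i
        linarith [hLCΔ i]
    _ ≤ ∑ i, L i := Finset.sum_le_sum_of_subset_of_nonneg (Finset.filter_subset _ _)
        fun i _ _ => hLnn i
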